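/- Let $\phi_0, \psi_0 : \mathbb{R} \to [0,1]$ be continuous with compact support, $\phi_0$ supported in $[0,1]$, $\psi_0$ supported in $[-1,1]$. Let $\eta_1 : (0,\infty) \to [0,1]$ and $\tau, v : (0,\infty) \to (0,\infty)$ be continuous, $v$ differentiable at $\omega_0$, and $\mu_0 \in (0,1)$, $\omega_0 > 0$. Define $F_\epsilon(\tilde t, \tilde\mu, \tilde\omega) = \eta_1(\omega_0 + \epsilon\tilde\omega)\, e^{-\frac{2}{\tau(\omega_0+\epsilon\tilde\omega)\,(\mu_0+\epsilon\tilde\mu)\, v(\omega_0+\epsilon\tilde\omega)}}\, \psi_0\!\left(\tilde t + \frac{1}{\epsilon}\left(\frac{2}{\mu_0 v(\omega_0)} - \frac{2}{(\mu_0+\epsilon\tilde\mu) v(\omega_0+\epsilon\tilde\omega)}\right)\right) \phi_0(\tilde t)\phi_0(\tilde\mu)\phi_0(\tilde\omega)$ on $[0,1]^3$. Then $\lim_{\epsilon\to 0^+} \int_{[0,1]^3} F_\epsilon = \eta_1(\omega_0)\, e^{-\frac{2}{\tau(\omega_0)\mu_0 v(\omega_0)}} \int_{[0,1]^3} \psi_0\!\left(\tilde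 t + \tfrac{2}{(\mu_0 v(\omega_0))^2}(v(\omega_0)\tilde\mu + \mu_0 v'(\omega_0)\tilde\omega)\right) \phi_0(\tilde t)\phi_0(\tilde\mu)\phi_0(\tilde\omega)\, d\tilde t\, d\tilde\mu\, d\tilde\omega$. -/

import Mathlib

open MeasureTheory Filter Topology Set

noncomputable def m1 : Measure ℝ := volume.restrict (Icc (0:ℝ) 1)
noncomputable def P2 : Measure (ℝ × ℝ) := m1.prod m1
noncomputable def P3 : Measure (ℝ × ℝ × ℝ) := m1.prod P2

instance : IsFiniteMeasure m1 := by
  constructor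
  rw [m1, Measure.restrict_apply_univ]
  simp [Real.volume_Icc]

instance : IsFiniteMeasure P2 := by unfold P2; infer_instance
instance : IsFiniteMeasure P3 := by unfold P3; infer_instance

lemma P3_eq : P3 = (volume : Measure (ℝ × ℝ × ℝ)).restrict
    ((Icc (0:ℝ) 1) ×ˢ ((Icc (0:ℝ) 1) ×ˢ (Icc (0:ℝ) 1))) := by
  rw [P3, P2, m1, Measure.prod_restrict, ← Measure.volume_eq_prod, Measure.prod_restrict,
    ← Measure.volume_eq_prod]

lemma iter_eq_prod (h : ℝ × ℝ × ℝ → ℝ) (hint : Integrable h P3) :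
    (∫ t in Icc (0:ℝ) 1, ∫ μ in Icc (0:ℝ) 1, ∫ ω in Icc (0:ℝ) 1, h (t, μ, ω)) =
      ∫ q, h q ∂P3 := by
  have h1 : ∀ᵐ t ∂m1, Integrable (fun p : ℝ × ℝ => h (t, p)) P2 := hint.prod_right_ae
  have h2 : (∫ t in Icc (0:ℝ) 1, ∫ μ in Icc (0:ℝ) 1, ∫ ω in Icc (0:ℝ) 1, h (t, μ, ω))
      = ∫ t, (∫ p, h (t, p) ∂P2) ∂m1 := by
    refine integral_congr_ae (h1.mono fun t ht => ?_)
    exact integral_integral ht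
  rw [h2]
  exact integral_integral hint

theorem stmt_6 (φ₀ ψ₀ : ℝ → ℝ)
    (hφ₀_cont : Continuous φ₀) (hψ₀_cont : Continuous ψ₀)
    (hφ₀_range : ∀ x, φ₀ x ∈ Icc (0:ℝ) 1) (hψ₀_range : ∀ x, ψ₀ x ∈ Icc (0:ℝ) 1)
    (hφ₀_supp : Function.support φ₀ ⊆ Icc (0:ℝ) 1)
    (hψ₀_supp : Function.support ψ₀ ⊆ Icc (-1:ℝ) 1)
    (η₁ τ v : ℝ → ℝ)
    (hη₁_cont : ContinuousOn η₁ (Ioi 0)) (hη₁_range : ∀ ω > 0, η₁ ω ∈ Icc (0:ℝ) 1)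
    (hτ_cont : ContinuousOn τ (Ioi 0)) (hτ_pos : ∀ ω > 0, 0 < τ ω)
    (hv_cont : ContinuousOn v (Ioi 0)) (hv_pos : ∀ ω > 0, 0 < v ω)
    (μ₀ ω₀ : ℝ) (hμ₀ : μ₀ ∈ Ioo (0:ℝ) 1) (hω₀ : 0 < ω₀)
    (v' : ℝ) (hv : HasDerivAt v v' ω₀) :
    Tendsto (fun ε : ℝ =>
      ∫ t in Icc (0:ℝ) 1, ∫ μ in Icc (0:ℝ) 1, ∫ ω in Icc (0:ℝ) 1,
        η₁ (ω₀ + ε * ω)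
          * Real.exp (-(2 / (τ (ω₀ + ε * ω) * (μ₀ + ε * μ) * v (ω₀ + ε * ω))))
          * ψ₀ (t + (1 / ε) * (2 / (μ₀ * v ω₀)
              - 2 / ((μ₀ + ε * μ) * v (ω₀ + ε * ω))))
          * φ₀ t * φ₀ μ * φ₀ ω)
      (𝓝[>] 0)
      (𝓝 (η₁ ω₀ * Real.exp (-(2 / (τ ω₀ * μ₀ * v ω₀)))
        * ∫ t in Icc (0:ℝ) 1, ∫ μ in Icc (0:ℝ) 1, ∫ ω in Icc (0:ℝ) 1,
            ψ₀ (t + 2 / (μ₀ * v ω₀) ^ 2 * (v ω₀ * μ + μ₀ * v' * ω))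
              * φ₀ t * φ₀ μ * φ₀ ω)) := by
  obtain ⟨hμ₀0, hμ₀1⟩ := hμ₀
  have hvω := hv_pos ω₀ hω₀
  have hτω := hτ_pos ω₀ hω₀
  set Q : Set (ℝ × ℝ × ℝ) := (Icc (0:ℝ) 1) ×ˢ ((Icc (0:ℝ) 1) ×ˢ (Icc (0:ℝ) 1)) with hQdef
  have hQm : MeasurableSet Q := measurableSet_Icc.prod (measurableSet_Icc.prod measurableSet_Icc)
  set C : ℝ := η₁ ω₀ * Real.exp (-(2 / (τ ω₀ * μ₀ * v ω₀))) with hC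
  set G : ℝ × ℝ × ℝ → ℝ := fun q =>
    ψ₀ (q.1 + 2 / (μ₀ * v ω₀) ^ 2 * (v ω₀ * q.2.1 + μ₀ * v' * q.2.2))
      * φ₀ q.1 * φ₀ q.2.1 * φ₀ q.2.2 with hG
  set F : ℝ → ℝ × ℝ × ℝ → ℝ := fun ε q =>
    η₁ (ω₀ + ε * q.2.2)
      * Real.exp (-(2 / (τ (ω₀ + ε * q.2.2) * (μ₀ + ε * q.2.1) * v (ω₀ + ε * q.2.2))))
      * ψ₀ (q.1 + (1 / ε) * (2 / (μ₀ * v ω₀) - 2 / ((μ₀ + ε * q.2.1) * v (ω₀ + ε * q.2.2))))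
      * φ₀ q.1 * φ₀ q.2.1 * φ₀ q.2.2 with hF
  have bφ : ∀ x, |φ₀ x| ≤ 1 := fun x =>
    abs_le.mpr ⟨by linarith [(hφ₀_range x).1], (hφ₀_range x).2⟩
  have bψ : ∀ x, |ψ₀ x| ≤ 1 := fun x =>
    abs_le.mpr ⟨by linarith [(hψ₀_range x).1], (hψ₀_range x).2⟩
  have mul_le : ∀ a b : ℝ, |a| ≤ 1 → |b| ≤ 1 → |a * b| ≤ 1 := fun a b ha hb => by
    rw [abs_mul]; exact mul_le_one₀ ha (abs_nonneg _) hb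
  -- measurability
  have hFmeas : ∀ ε : ℝ, 0 < ε → AEStronglyMeasurable (F ε) P3 := by
    intro ε hε
    rw [P3_eq]
    have hcω : Continuous (fun q : ℝ × ℝ × ℝ => ω₀ + ε * q.2.2) := by fun_prop
    have hcμ : Continuous (fun q : ℝ × ℝ × ℝ => μ₀ + ε * q.2.1) := by fun_prop
    have hmaps : MapsTo (fun q : ℝ × ℝ × ℝ => ω₀ + ε * q.2.2) Q (Ioi 0) := by
      intro q hq
      have h2 : (0:ℝ) ≤ q.2.2 := hq.2.2.1
      exact mem_Ioi.mpr (by positivity)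
    have hτ' : ContinuousOn (fun q : ℝ × ℝ × ℝ => τ (ω₀ + ε * q.2.2)) Q :=
      hτ_cont.comp hcω.continuousOn hmaps
    have hv' : ContinuousOn (fun q : ℝ × ℝ × ℝ => v (ω₀ + ε * q.2.2)) Q :=
      hv_cont.comp hcω.continuousOn hmaps
    have hη' : ContinuousOn (fun q : ℝ × ℝ × ℝ => η₁ (ω₀ + ε * q.2.2)) Q :=
      hη₁_cont.comp hcω.continuousOn hmaps
    have hvpos : ∀ q ∈ Q, 0 < v (ω₀ + ε * q.2.2) := fun q hq => hv_pos _ (hmaps hq)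
    have hτpos : ∀ q ∈ Q, 0 < τ (ω₀ + ε * q.2.2) := fun q hq => hτ_pos _ (hmaps hq)
    have hμpos : ∀ q ∈ Q, 0 < μ₀ + ε * q.2.1 := by
      intro q hq
      have h1 : (0:ℝ) ≤ q.2.1 := hq.2.1.1
      positivity
    have hexp : ContinuousOn (fun q : ℝ × ℝ × ℝ =>
        Real.exp (-(2 / (τ (ω₀ + ε * q.2.2) * (μ₀ + ε * q.2.1) * v (ω₀ + ε * q.2.2))))) Q := by
      apply Real.continuous_exp.comp_continuousOn
      apply ContinuousOn.neg
      apply ContinuousOn.div continuousOn_const ((hτ'.mul hcμ.continuousOn).mul hv')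
      intro q hq
      exact (mul_pos (mul_pos (hτpos q hq) (hμpos q hq)) (hvpos q hq)).ne'
    have hψ' : ContinuousOn (fun q : ℝ × ℝ × ℝ =>
        ψ₀ (q.1 + (1 / ε) * (2 / (μ₀ * v ω₀)
          - 2 / ((μ₀ + ε * q.2.1) * v (ω₀ + ε * q.2.2))))) Q := by
      apply hψ₀_cont.comp_continuousOn
      apply ContinuousOn.add continuous_fst.continuousOn
      apply ContinuousOn.mul continuousOn_const
      apply ContinuousOn.sub continuousOn_const
      apply ContinuousOn.div continuousOn_const (hcμ.continuousOn.mul hv')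
      intro q hq
      exact (mul_pos (hμpos q hq) (hvpos q hq)).ne'
    have hcont : ContinuousOn (F ε) Q := by
      simp only [hF]
      exact ((((hη'.mul hexp).mul hψ').mul
          (hφ₀_cont.comp continuous_fst).continuousOn).mul
          (hφ₀_cont.comp (continuous_fst.comp continuous_snd)).continuousOn).mul
          (hφ₀_cont.comp (continuous_snd.comp continuous_snd)).continuousOn
    exact hcont.aestronglyMeasurable hQm
  -- bound
  have habs : ∀ ε : ℝ, 0 < ε → ∀ q ∈ Q, ‖F ε q‖ ≤ 1 := by
    intro ε hε q hq
    have h1 : (0:ℝ) ≤ q.2.1 := hq.2.1.1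
    have h2 : (0:ℝ) ≤ q.2.2 := hq.2.2.1
    have hω' : 0 < ω₀ + ε * q.2.2 := by positivity
    have hμ' : 0 < μ₀ + ε * q.2.1 := by positivity
    have hd : 0 < τ (ω₀ + ε * q.2.2) * (μ₀ + ε * q.2.1) * v (ω₀ + ε * q.2.2) :=
      mul_pos (mul_pos (hτ_pos _ hω') hμ') (hv_pos _ hω')
    have he : |Real.exp (-(2 / (τ (ω₀ + ε * q.2.2) * (μ₀ + ε * q.2.1) * v (ω₀ + ε * q.2.2))))| ≤ 1 := by
      rw [abs_of_pos (Real.exp_pos _)]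
      apply Real.exp_le_one_iff.mpr
      rw [neg_nonpos]
      positivity
    have bη : |η₁ (ω₀ + ε * q.2.2)| ≤ 1 :=
      abs_le.mpr ⟨by linarith [(hη₁_range _ hω').1], (hη₁_range _ hω').2⟩
    simp only [hF, Real.norm_eq_abs]
    exact mul_le _ _ (mul_le _ _ (mul_le _ _ (mul_le _ _ (mul_le _ _ bη he) (bψ _)) (bφ _)) (bφ _)) (bφ _)
  have hae : ∀ᵐ q ∂P3, q ∈ Q := by rw [P3_eq]; exact ae_restrict_mem hQm
  have hFint : ∀ ε : ℝ, 0 < ε → Integrable (F ε) P3 := by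
    intro ε hε
    refine ⟨hFmeas ε hε, HasFiniteIntegral.of_bounded (C := 1) ?_⟩
    filter_upwards [hae] with q hq
    exact habs ε hε q hq
  -- integrability of limit
  have hGbd : ∀ q, ‖G q‖ ≤ 1 := by
    intro q
    simp only [hG, Real.norm_eq_abs]
    exact mul_le _ _ (mul_le _ _ (mul_le _ _ (bψ _) (bφ _)) (bφ _)) (bφ _)
  have hGint : Integrable G P3 := by
    refine ⟨(Continuous.aestronglyMeasurable ?_), HasFiniteIntegral.of_bounded (C := 1) (ae_of_all _ hGbd)⟩
    simp only [hG]; fun_prop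
  -- pointwise limit
  have hlim : ∀ᵐ q ∂P3, Tendsto (fun ε => F ε q) (𝓝[>] (0:ℝ)) (𝓝 (C * G q)) := by
    filter_upwards [hae] with q hq
    obtain ⟨t, μ, ω⟩ := q
    have h0μ : (0:ℝ) ≤ μ := hq.2.1.1
    have h0ω : (0:ℝ) ≤ ω := hq.2.2.1
    have Tω : Tendsto (fun ε : ℝ => ω₀ + ε * ω) (𝓝[>] 0) (𝓝[Ioi 0] ω₀) := by
      rw [tendsto_nhdsWithin_iff]
      constructor
      · have h : Tendsto (fun ε : ℝ => ω₀ + ε * ω) (𝓝 0) (𝓝 (ω₀ + 0 * ω)) :=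
          (Continuous.tendsto (by fun_prop) 0)
        simpa using h.mono_left nhdsWithin_le_nhds
      · filter_upwards [self_mem_nhdsWithin] with ε hε
        have hε' : (0:ℝ) < ε := hε
        exact mem_Ioi.mpr (by positivity)
    have Tμ : Tendsto (fun ε : ℝ => μ₀ + ε * μ) (𝓝[>] 0) (𝓝 μ₀) := by
      have h : Tendsto (fun ε : ℝ => μ₀ + ε * μ) (𝓝 0) (𝓝 (μ₀ + 0 * μ)) :=
        (Continuous.tendsto (by fun_prop) 0)
      simpa using h.mono_left nhdsWithin_le_nhds
    have Tη : Tendsto (fun ε : ℝ => η₁ (ω₀ + ε * ω)) (𝓝[>] 0) (𝓝 (η₁ ω₀)) :=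
      ((hη₁_cont ω₀ (mem_Ioi.mpr hω₀)).tendsto).comp Tω
    have Tτ : Tendsto (fun ε : ℝ => τ (ω₀ + ε * ω)) (𝓝[>] 0) (𝓝 (τ ω₀)) :=
      ((hτ_cont ω₀ (mem_Ioi.mpr hω₀)).tendsto).comp Tω
    have Tv : Tendsto (fun ε : ℝ => v (ω₀ + ε * ω)) (𝓝[>] 0) (𝓝 (v ω₀)) :=
      ((hv_cont ω₀ (mem_Ioi.mpr hω₀)).tendsto).comp Tω
    have hdenne : τ ω₀ * μ₀ * v ω₀ ≠ 0 := by positivity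
    have Texp : Tendsto (fun ε : ℝ =>
        Real.exp (-(2 / (τ (ω₀ + ε * ω) * (μ₀ + ε * μ) * v (ω₀ + ε * ω))))) (𝓝[>] 0)
        (𝓝 (Real.exp (-(2 / (τ ω₀ * μ₀ * v ω₀))))) :=
      (Real.continuous_exp.tendsto _).comp
        ((tendsto_const_nhds.div ((Tτ.mul Tμ).mul Tv) hdenne).neg)
    -- derivative computation
    have hf0ne : μ₀ * v ω₀ ≠ 0 := by positivity
    have h1d : HasDerivAt (fun ε : ℝ => μ₀ + ε * μ) μ 0 := by
      simpa using ((hasDerivAt_id (0:ℝ)).mul_const μ).const_add μ₀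
    have hin : HasDerivAt (fun ε : ℝ => ω₀ + ε * ω) ω 0 := by
      simpa using ((hasDerivAt_id (0:ℝ)).mul_const ω).const_add ω₀
    have h2d : HasDerivAt (fun ε : ℝ => v (ω₀ + ε * ω)) (v' * ω) 0 := by
      have hv0 : HasDerivAt v v' ((fun ε : ℝ => ω₀ + ε * ω) 0) := by simpa using hv
      exact hv0.comp 0 hin
    have hfd : HasDerivAt (fun ε : ℝ => (μ₀ + ε * μ) * v (ω₀ + ε * ω))
        (μ * v ω₀ + μ₀ * (v' * ω)) 0 := by
      have := h1d.fun_mul h2d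
      simpa using this
    have h0 : ((fun ε : ℝ => μ₀ + ε * μ) 0) * ((fun ε : ℝ => v (ω₀ + ε * ω)) 0) ≠ 0 := by
      simpa using hf0ne
    have hGder : HasDerivAt (fun ε : ℝ => 2 / ((μ₀ + ε * μ) * v (ω₀ + ε * ω)))
        (-(2 * (μ * v ω₀ + μ₀ * (v' * ω))) / (μ₀ * v ω₀) ^ 2) 0 := by
      have h := (hasDerivAt_const (0:ℝ) (2:ℝ)).fun_div hfd (by simpa using hf0ne)
      convert h using 1
      · rfl
      · rfl
      · simp
    have hslope := hasDerivAt_iff_tendsto_slope.mp hGder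
    have hmono : 𝓝[>] (0:ℝ) ≤ 𝓝[≠] (0:ℝ) :=
      nhdsWithin_mono 0 (fun x hx => ne_of_gt hx)
    have Tinner : Tendsto (fun ε : ℝ =>
        (1 / ε) * (2 / (μ₀ * v ω₀) - 2 / ((μ₀ + ε * μ) * v (ω₀ + ε * ω)))) (𝓝[>] 0)
        (𝓝 (2 / (μ₀ * v ω₀) ^ 2 * (v ω₀ * μ + μ₀ * v' * ω))) := by
      have h1 := (hslope.mono_left hmono).neg
      have heq : ∀ ε : ℝ,
          -(slope (fun ε : ℝ => 2 / ((μ₀ + ε * μ) * v (ω₀ + ε * ω))) 0 ε)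
            = (1 / ε) * (2 / (μ₀ * v ω₀) - 2 / ((μ₀ + ε * μ) * v (ω₀ + ε * ω))) := by
        intro ε
        rw [slope_def_field]
        simp only [zero_mul, add_zero, sub_zero]
        ring
      have hval : 2 / (μ₀ * v ω₀) ^ 2 * (v ω₀ * μ + μ₀ * v' * ω)
          = -(-(2 * (μ * v ω₀ + μ₀ * (v' * ω))) / (μ₀ * v ω₀) ^ 2) := by ring
      rw [hval]
      exact h1.congr heq
    have Tψ : Tendsto (fun ε : ℝ => ψ₀ (t + (1 / ε) * (2 / (μ₀ * v ω₀)
        - 2 / ((μ₀ + ε * μ) * v (ω₀ + ε * ω))))) (𝓝[>] 0)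
        (𝓝 (ψ₀ (t + 2 / (μ₀ * v ω₀) ^ 2 * (v ω₀ * μ + μ₀ * v' * ω)))) :=
      (hψ₀_cont.tendsto _).comp (tendsto_const_nhds.add Tinner)
    have Tall := ((((Tη.mul Texp).mul Tψ).mul (tendsto_const_nhds (x := φ₀ t))).mul
      (tendsto_const_nhds (x := φ₀ μ))).mul (tendsto_const_nhds (x := φ₀ ω))
    have hvalue : C * G (t, μ, ω)
        = η₁ ω₀ * Real.exp (-(2 / (τ ω₀ * μ₀ * v ω₀)))
          * ψ₀ (t + 2 / (μ₀ * v ω₀) ^ 2 * (v ω₀ * μ + μ₀ * v' * ω))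
          * φ₀ t * φ₀ μ * φ₀ ω := by
      simp only [hC, hG]; ring
    rw [hvalue]
    simp only [hF]
    exact Tall
  -- dominated convergence
  have main : Tendsto (fun ε => ∫ q, F ε q ∂P3) (𝓝[>] (0:ℝ)) (𝓝 (∫ q, C * G q ∂P3)) := by
    apply tendsto_integral_filter_of_dominated_convergence (bound := fun _ => (1:ℝ))
    · filter_upwards [self_mem_nhdsWithin] with ε hε
      exact hFmeas ε hε
    · filter_upwards [self_mem_nhdsWithin] with ε hε
      filter_upwards [hae] with q hq
      exact habs ε hε q hq
    · exact integrable_const 1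
    · exact hlim
  have htarget : (∫ q, C * G q ∂P3)
      = C * ∫ t in Icc (0:ℝ) 1, ∫ μ in Icc (0:ℝ) 1, ∫ ω in Icc (0:ℝ) 1,
          ψ₀ (t + 2 / (μ₀ * v ω₀) ^ 2 * (v ω₀ * μ + μ₀ * v' * ω))
            * φ₀ t * φ₀ μ * φ₀ ω := by
    rw [integral_const_mul, iter_eq_prod G hGint]
  rw [htarget] at main
  refine Tendsto.congr' ?_ main
  filter_upwards [self_mem_nhdsWithin] with ε hε
  exact (iter_eq_prod (F ε) (hFint ε hε)).symm
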